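/- For all integers e ≥ 2, d ≥ 1, z, every 0 ≤ k ≤ e−1, and every n ≥ 0, the sequence (μ_n(e,k,d,z))_{n≥0} satisfies the linear recurrence with characteristic polynomial (x − z)^e − d^{e−1}; explicitly, μ_{n+e}(e,k,d,z) = Σ_{j=1}^{e} (−1)^{j+1} C(e,j) z^{j} μ_{n+e−j}(e,k,d,z) + d^{e−1} μ_n(e,k,d,z). In particular, for e = 3: μ_{n+3}(3,k,d,z) = 3z·μ_{n+2}(3,k,d,z) − 3z²·μ_{n+1}(3,k,d,z) + (z³ + d²)·μ_n(3,k,d,z). -/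

import Mathlib

/-- The generalized Rédei polynomials
`μ_n(e,k,d,z) = Σ_{h=0}^{n} C(n, e·h − k) · d^{(e−1)h − k} · z^{n − e·h + k}`,
where the binomial coefficient is `0` when `e·h − k < 0` or `e·h − k > n`. -/
def mu (e k : ℕ) (d z : ℤ) (n : ℕ) : ℤ :=
  ∑ h ∈ Finset.range (n + 1),
    if k ≤ e * h then
      (n.choose (e * h - k) : ℤ) * d ^ ((e - 1) * h - k) * z ^ (n + k - e * h)
    else 0

def A (c : ℕ → ℤ) (z : ℤ) (n : ℕ) : ℤ :=
  ∑ j ∈ Finset.range (n + 1), (n.choose j : ℤ) * c j * z ^ (n - j)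

lemma A_succ (c : ℕ → ℤ) (z : ℤ) (n : ℕ) :
    A c z (n + 1) = z * A c z n + A (fun j => c (j + 1)) z n := by
  unfold A
  rw [Finset.sum_range_succ']
  have h1 : ∀ j ∈ Finset.range (n + 1),
      ((n+1).choose (j+1) : ℤ) * c (j+1) * z ^ (n + 1 - (j+1)) =
      (n.choose j : ℤ) * c (j+1) * z ^ (n - j)
        + (n.choose (j+1) : ℤ) * c (j+1) * z ^ (n - j) := by
    intro j hj
    rw [Nat.choose_succ_succ]
    push_cast
    simp only [Nat.succ_eq_add_one]
    ring
  rw [Finset.sum_congr rfl h1, Finset.sum_add_distrib]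
  have h2 : z * ∑ j ∈ Finset.range (n + 1), (n.choose j : ℤ) * c j * z ^ (n - j)
      = (∑ j ∈ Finset.range (n + 1), (n.choose (j+1) : ℤ) * c (j+1) * z ^ (n - j))
        + ((n+1).choose 0 : ℤ) * c 0 * z ^ (n + 1 - 0) := by
    rw [Finset.mul_sum]
    have h3 : ∀ j ∈ Finset.range (n+1),
        z * ((n.choose j : ℤ) * c j * z ^ (n - j))
          = (n.choose j : ℤ) * c j * z ^ (n + 1 - j) := by
      intro j hj
      simp only [Finset.mem_range] at hj
      have : n + 1 - j = (n - j) + 1 := by omega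
      rw [this, pow_succ]; ring
    rw [Finset.sum_congr rfl h3, Finset.sum_range_succ']
    rw [Finset.sum_range_succ (fun j => ((n.choose (j+1)) : ℤ) * c (j+1) * z ^ (n - j))]
    simp [Nat.choose_succ_self, Nat.succ_sub_succ]
  rw [h2]
  ring

lemma A_key (c : ℕ → ℤ) (z : ℤ) : ∀ (m n : ℕ),
    (∑ j ∈ Finset.range (m + 1),
      (-1 : ℤ) ^ j * (m.choose j : ℤ) * z ^ j * A c z (n + m - j))
      = A (fun i => c (i + m)) z n := by
  intro m
  induction m with
  | zero => intro n; simp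
  | succ m ih =>
    intro n
    rw [Finset.sum_range_succ']
    have h1 : ∀ j ∈ Finset.range (m + 1),
        (-1 : ℤ) ^ (j+1) * ((m+1).choose (j+1) : ℤ) * z ^ (j+1) * A c z (n + (m+1) - (j+1))
        = -(z * ((-1 : ℤ) ^ j * (m.choose j : ℤ) * z ^ j * A c z (n + m - j)))
          + (-1 : ℤ) ^ (j+1) * (m.choose (j+1) : ℤ) * z ^ (j+1) * A c z (n + m - j) := by
      intro j hj
      simp only [Finset.mem_range] at hj
      have e1 : n + (m+1) - (j+1) = n + m - j := by omega
      rw [e1, Nat.choose_succ_succ]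
      push_cast
      simp only [Nat.succ_eq_add_one]
      ring
    rw [Finset.sum_congr rfl h1, Finset.sum_add_distrib, Finset.sum_neg_distrib,
      ← Finset.mul_sum, ih n]
    have hS : (∑ j ∈ Finset.range (m+1),
          (-1:ℤ)^(j+1) * (m.choose (j+1):ℤ) * z^(j+1) * A c z (n+m-j))
        + (-1:ℤ)^(0:ℕ) * (((m+1).choose 0 : ℕ):ℤ) * z^(0:ℕ) * A c z (n+(m+1)-0)
        = ∑ j ∈ Finset.range (m+1),
            (-1:ℤ)^j * (m.choose j:ℤ) * z^j * A c z ((n+1)+m-j) := by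
      rw [Finset.sum_range_succ' (fun j => (-1:ℤ)^j * (m.choose j:ℤ) * z^j * A c z ((n+1)+m-j)) m,
        Finset.sum_range_succ (fun j => (-1:ℤ)^(j+1) * (m.choose (j+1):ℤ) * z^(j+1) * A c z (n+m-j))]
      have e2 : ∀ j ∈ Finset.range m,
          (-1:ℤ)^(j+1) * (m.choose (j+1):ℤ) * z^(j+1) * A c z ((n+1)+m-(j+1))
          = (-1:ℤ)^(j+1) * (m.choose (j+1):ℤ) * z^(j+1) * A c z (n+m-j) := by
        intro j hj
        congr 2
        omega
      rw [Finset.sum_congr rfl e2]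
      simp only [Nat.choose_succ_self, Nat.cast_zero, Nat.choose_zero_right, Nat.cast_one,
        pow_zero, one_mul, mul_zero, zero_mul, add_zero, mul_one]
      have e4 : n + (m+1) - 0 = n + 1 + m - 0 := by omega
      rw [e4]
    rw [add_assoc, hS, ih (n+1), A_succ (fun i => c (i + m)) z n]
    have e3 : (fun j => c (j + 1 + m)) = (fun i => c (i + (m + 1))) := by
      funext i; congr 1; omega
    rw [e3]
    ring

def cf (e k : ℕ) (d : ℤ) (j : ℕ) : ℤ :=
  if e ∣ (j + k) then d ^ ((e - 1) * ((j + k) / e) - k) else 0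

lemma cf_shift (e k : ℕ) (he : 2 ≤ e) (hk : k ≤ e - 1) (d : ℤ) (j : ℕ) :
    cf e k d (j + e) = d ^ (e - 1) * cf e k d j := by
  unfold cf
  have hdvd : e ∣ (j + e + k) ↔ e ∣ (j + k) := by
    have : j + e + k = (j + k) + e := by ring
    rw [this, Nat.dvd_add_self_right]
  rw [if_congr hdvd rfl rfl]
  by_cases h : e ∣ (j + k)
  · rw [if_pos h, if_pos h]
    have hq : (j + e + k) / e = (j + k) / e + 1 := by
      have : j + e + k = (j + k) + e := by omega
      rw [this, Nat.add_div_right _ (by omega)]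
    rw [hq]
    rcases Nat.eq_zero_or_pos ((j + k) / e) with h0 | h0
    · have hlt : j + k < e := by
        rw [Nat.div_eq_zero_iff] at h0
        exact h0.resolve_left (by omega)
      have hjk : j + k = 0 := Nat.eq_zero_of_dvd_of_lt h hlt
      have hk0 : k = 0 := by omega
      rw [h0, hk0]
      simp
    · have hms : (e - 1) * ((j + k) / e + 1) = (e - 1) * ((j + k) / e) + (e - 1) :=
        Nat.mul_succ _ _
      have h1 : e - 1 ≤ (e - 1) * ((j + k) / e) := Nat.le_mul_of_pos_right _ h0
      have : (e - 1) * ((j + k) / e + 1) - k = ((e - 1) * ((j + k) / e) - k) + (e - 1) := by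
        omega
      rw [this, pow_add]
      ring
  · rw [if_neg h, if_neg h, mul_zero]

lemma mu_eq_A (e k : ℕ) (he : 2 ≤ e) (hk : k ≤ e - 1) (d z : ℤ) (n : ℕ) :
    mu e k d z n = A (cf e k d) z n := by
  have hstep1 : mu e k d z n
      = ∑ h ∈ (Finset.range (n+1)).filter (fun h => k ≤ e*h ∧ e*h ≤ n+k),
          (n.choose (e*h - k) : ℤ) * d ^ ((e-1)*h - k) * z ^ (n + k - e*h) := by
    rw [Finset.sum_filter]
    unfold mu
    apply Finset.sum_congr rfl
    intro h hh
    by_cases h1 : k ≤ e*h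
    · by_cases h2 : e*h ≤ n+k
      · rw [if_pos h1, if_pos ⟨h1, h2⟩]
      · rw [if_pos h1, if_neg (by tauto)]
        have : n < e*h - k := by omega
        rw [Nat.choose_eq_zero_of_lt this]
        simp
    · rw [if_neg h1, if_neg (by tauto)]
  have hstep2 : A (cf e k d) z n
      = ∑ j ∈ (Finset.range (n+1)).filter (fun j => e ∣ (j+k)),
          (n.choose j : ℤ) * d ^ ((e-1)*((j+k)/e) - k) * z ^ (n - j) := by
    rw [Finset.sum_filter]
    unfold A cf
    apply Finset.sum_congr rfl
    intro j hj
    by_cases h1 : e ∣ (j+k)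
    · rw [if_pos h1, if_pos h1]
    · rw [if_neg h1, if_neg h1]; ring
  rw [hstep1, hstep2]
  apply Finset.sum_nbij' (fun h => e*h - k) (fun j => (j+k)/e)
  · intro a ha
    simp only [Finset.mem_filter, Finset.mem_range] at ha ⊢
    obtain ⟨ha1, ha2, ha3⟩ := ha
    refine ⟨by omega, ?_⟩
    have : e*a - k + k = e*a := by omega
    rw [this]
    exact ⟨a, rfl⟩
  · intro b hb
    simp only [Finset.mem_filter, Finset.mem_range] at hb ⊢
    obtain ⟨hb1, hb2⟩ := hb
    have heq : e * ((b+k)/e) = b + k := Nat.mul_div_cancel' hb2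
    have hle : (b+k)/e ≤ n := by
      by_contra hc
      push_neg at hc
      have h5 : e*(n+1) ≤ e*((b+k)/e) := Nat.mul_le_mul_left e hc
      have h6 : e*(n+1) = e*n + e := by ring
      have h7 : n ≤ e*n := Nat.le_mul_of_pos_left n (by omega)
      omega
    exact ⟨by omega, by omega, by omega⟩
  · intro a ha
    simp only [Finset.mem_filter, Finset.mem_range] at ha
    obtain ⟨ha1, ha2, ha3⟩ := ha
    have : e*a - k + k = e*a := by omega
    rw [this]
    exact Nat.mul_div_cancel_left a (by omega)
  · intro b hb
    simp only [Finset.mem_filter, Finset.mem_range] at hb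
    obtain ⟨hb1, hb2⟩ := hb
    have heq : e * ((b+k)/e) = b + k := Nat.mul_div_cancel' hb2
    omega
  · intro a ha
    simp only [Finset.mem_filter, Finset.mem_range] at ha
    obtain ⟨ha1, ha2, ha3⟩ := ha
    have h4 : e*a - k + k = e*a := by omega
    rw [h4, Nat.mul_div_cancel_left a (by omega : 0 < e)]
    have h5 : n - (e*a - k) = n + k - e*a := by omega
    rw [h5]

lemma A_cf_shift (e k : ℕ) (he : 2 ≤ e) (hk : k ≤ e - 1) (d z : ℤ) (n : ℕ) :
    A (fun i => cf e k d (i + e)) z n = d ^ (e - 1) * A (cf e k d) z n := by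
  unfold A
  rw [Finset.mul_sum]
  apply Finset.sum_congr rfl
  intro j hj
  show (n.choose j : ℤ) * cf e k d (j + e) * z ^ (n - j) = _
  rw [cf_shift e k he hk d j]
  ring

/-- The sequence `(μ_n(e,k,d,z))_{n≥0}` satisfies the linear recurrence with
characteristic polynomial `(x − z)^e − d^{e−1}`:
`μ_{n+e} = Σ_{j=1}^{e} (−1)^{j+1} C(e,j) z^j μ_{n+e−j} + d^{e−1} μ_n`. -/
theorem mu_linear_recurrence (e k : ℕ) (he : 2 ≤ e) (hk : k ≤ e - 1)
    (d z : ℤ) (hd : 1 ≤ d) (n : ℕ) :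
    mu e k d z (n + e) =
      (∑ j ∈ Finset.Icc 1 e,
        (-1 : ℤ) ^ (j + 1) * (e.choose j : ℤ) * z ^ j * mu e k d z (n + e - j))
      + d ^ (e - 1) * mu e k d z n := by
  have hmu : ∀ m, mu e k d z m = A (cf e k d) z m := fun m => mu_eq_A e k he hk d z m
  simp only [hmu]
  have hkey := A_key (cf e k d) z e n
  rw [A_cf_shift e k he hk d z n] at hkey
  have hins : Finset.range (e + 1) = insert 0 (Finset.Icc 1 e) := by
    ext x
    simp only [Finset.mem_range, Finset.mem_insert, Finset.mem_Icc]
    omega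
  rw [hins, Finset.sum_insert (by simp)] at hkey
  have hterms : ∀ j ∈ Finset.Icc 1 e,
      (-1 : ℤ) ^ (j + 1) * (e.choose j : ℤ) * z ^ j * A (cf e k d) z (n + e - j)
      = -((-1 : ℤ) ^ j * (e.choose j : ℤ) * z ^ j * A (cf e k d) z (n + e - j)) := by
    intro j hj
    rw [pow_succ]
    ring
  rw [Finset.sum_congr rfl hterms, Finset.sum_neg_distrib]
  simp only [pow_zero, Nat.choose_zero_right, Nat.cast_one, one_mul, Nat.sub_zero] at hkey
  linarith
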